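/- Fix G ∈ ℝ^{m×K}, g_0 = G w̃ with w̃ ∈ W, λ ≥ 0, ρ > 0, and stepsize β > 0. Let w*_{ρ,λ} be the minimizer over W of f(w) = (1/2)‖Gw + λ g_0‖² + (ρ/2)‖w‖². Let w_s be a W-valued random variable, and let X, X' be two independent random matrices in ℝ^{m×K}, independent of w_s, with E[X] = E[X'] = G, E‖X − G‖² ≤ Kσ_0², E‖X' − G‖² ≤ Kσ_0², and ‖G‖ ≤ C_g. Define w_{s+1} = Π_W( w_s − β [ Xᵀ( X' w_s + λ X' w̃ ) + ρ w_s ] ), where Π_W is the Euclidean projection onto W. Then E‖w_{s+1} − w*_{ρ,λ}‖² ≤ (1 − 2βρ) E‖w_s − w*_{ρ,λ}‖² + 3β² C_1, where C_1 = 4(1+λ²)(Kσ_0² + C_g²)² + ρ². -/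

import Mathlib

open MeasureTheory ProbabilityTheory BigOperators
open scoped RealInnerProductSpace ENNReal NNReal

noncomputable section

/-- `ℝ^m` with the Euclidean inner product and norm. -/
abbrev Euc (m : ℕ) := EuclideanSpace ℝ (Fin m)

/-- The probability simplex `W ⊆ ℝ^K`. -/
def simplex (K : ℕ) : Set (Euc K) := {w | (∀ i, 0 ≤ w i) ∧ ∑ i, w i = 1}

/-- `g_w = ∑ i, w i • g i`, i.e. the matrix-vector product `G w`, where `G` is the
`m × K` matrix with columns `g i`. -/
def comb {m K : ℕ} (g : Fin K → Euc m) (w : Euc K) : Euc m := ∑ i, w i • g i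

/-- Squared Frobenius norm of the `m × K` matrix with columns `g i`. -/
def frobSq {m K : ℕ} (g : Fin K → Euc m) : ℝ := ∑ i, ‖g i‖ ^ 2

/-- Frobenius norm of the `m × K` matrix with columns `g i`. -/
def frob {m K : ℕ} (g : Fin K → Euc m) : ℝ := Real.sqrt (frobSq g)

/-- `Gᵀ v ∈ ℝ^K`, where `G` is the matrix with columns `g i`. -/
def tvec {m K : ℕ} (g : Fin K → Euc m) (v : Euc m) : Euc K :=
  (EuclideanSpace.equiv (Fin K) ℝ).symm fun i => ⟪g i, v⟫

/-- `p` is the Euclidean projection of `z` onto the set `C`. -/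
def projOn {n : ℕ} (C : Set (Euc n)) (z p : Euc n) : Prop :=
  p ∈ C ∧ ∀ u ∈ C, ‖z - p‖ ≤ ‖z - u‖

section s4aux

variable {m K n : ℕ}

lemma s4_tvec_apply (g : Fin K → Euc m) (v : Euc m) (i : Fin K) : tvec g v i = ⟪g i, v⟫ := rfl

lemma s4_norm_sq (x : Euc n) : ‖x‖ ^ 2 = ∑ i, x i ^ 2 := by
  rw [← real_inner_self_eq_norm_sq]
  rw [real_inner_self_eq_norm_mul_norm, ← sq, EuclideanSpace.norm_sq_eq]
  simp [sq]

lemma s4_comb_add (g : Fin K → Euc m) (a b : Euc K) : comb g (a + b) = comb g a + comb g b := by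
  simp only [comb, PiLp.add_apply, add_smul, Finset.sum_add_distrib]

lemma s4_comb_smul (g : Fin K → Euc m) (t : ℝ) (a : Euc K) : comb g (t • a) = t • comb g a := by
  simp only [comb, PiLp.smul_apply, smul_eq_mul, mul_smul, Finset.smul_sum]

lemma s4_comb_sub (g : Fin K → Euc m) (a b : Euc K) : comb g (a - b) = comb g a - comb g b := by
  have h := s4_comb_add g (a - b) b
  rw [sub_add_cancel] at h
  rw [h]; abel

lemma s4_inner_tvec (g : Fin K → Euc m) (v : Euc m) (h : Euc K) :
    ⟪tvec g v, h⟫ = ⟪v, comb g h⟫ := by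
  have h1 : ⟪tvec g v, h⟫ = ∑ i, ⟪g i, v⟫ * h i := by
    simp [PiLp.inner_apply, RCLike.inner_apply, s4_tvec_apply]
    exact Finset.sum_congr rfl fun _ _ => mul_comm _ _
  rw [h1, comb, inner_sum]
  refine Finset.sum_congr rfl fun i _ => ?_
  rw [real_inner_smul_right, real_inner_comm]
  ring

lemma s4_bilin (a b : Fin K → Euc m) (v d : Euc K) :
    ⟪tvec a (comb b v), d⟫ = ∑ i, ∑ j, ⟪a i, b j⟫ * (v j * d i) := by
  have h1 : ⟪tvec a (comb b v), d⟫ = ∑ i, ⟪a i, comb b v⟫ * d i := by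
    simp [PiLp.inner_apply, RCLike.inner_apply, s4_tvec_apply]
    exact Finset.sum_congr rfl fun _ _ => mul_comm _ _
  rw [h1]
  refine Finset.sum_congr rfl fun i _ => ?_
  rw [comb, inner_sum, Finset.sum_mul]
  refine Finset.sum_congr rfl fun j _ => ?_
  rw [real_inner_smul_right]
  ring

lemma s4_norm_sub_smul_sq (a b : Euc n) (t : ℝ) :
    ‖a - t • b‖ ^ 2 = ‖a‖ ^ 2 - 2 * t * ⟪a, b⟫ + t ^ 2 * ‖b‖ ^ 2 := by
  rw [norm_sub_sq_real, real_inner_smul_right, norm_smul, mul_pow]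
  simp only [Real.norm_eq_abs, sq_abs]
  ring

lemma s4_norm_add_smul_sq (a b : Euc n) (t : ℝ) :
    ‖a + t • b‖ ^ 2 = ‖a‖ ^ 2 + 2 * t * ⟪a, b⟫ + t ^ 2 * ‖b‖ ^ 2 := by
  rw [norm_add_sq_real, real_inner_smul_right, norm_smul, mul_pow]
  simp only [Real.norm_eq_abs, sq_abs]
  ring

lemma s4_simplex_comp {w : Euc K} (hw : w ∈ simplex K) (i : Fin K) : 0 ≤ w i ∧ w i ≤ 1 := by
  refine ⟨hw.1 i, ?_⟩
  have h := Finset.single_le_sum (f := fun j => w j) (fun j _ => hw.1 j) (Finset.mem_univ i)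
  rw [hw.2] at h
  exact h

lemma s4_simplex_norm_le {w : Euc K} (hw : w ∈ simplex K) : ‖w‖ ≤ 1 := by
  have h2 : ‖w‖ ^ 2 ≤ 1 := by
    rw [s4_norm_sq]
    calc ∑ i, w i ^ 2 ≤ ∑ i, w i := by
          refine Finset.sum_le_sum fun i _ => ?_
          obtain ⟨h0, h1⟩ := s4_simplex_comp hw i
          nlinarith
      _ = 1 := hw.2
  nlinarith [norm_nonneg w]

lemma s4_simplex_seg {w u : Euc K} (hw : w ∈ simplex K) (hu : u ∈ simplex K) {t : ℝ}
    (ht0 : 0 ≤ t) (ht1 : t ≤ 1) : w + t • (u - w) ∈ simplex K := by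
  have happ : ∀ i, (w + t • (u - w)) i = w i + t * (u i - w i) := fun i => rfl
  constructor
  · intro i
    rw [happ i]
    nlinarith [hw.1 i, hu.1 i]
  · simp only [happ]
    rw [Finset.sum_add_distrib, ← Finset.mul_sum, Finset.sum_sub_distrib, hu.2, hw.2]
    ring

lemma s4_proj {z p u : Euc n} (hp : projOn (simplex n) z p) (hu : u ∈ simplex n) :
    ‖p - u‖ ^ 2 ≤ ‖z - u‖ ^ 2 := by
  obtain ⟨hpC, hmin⟩ := hp
  have key : ⟪z - p, u - p⟫ ≤ 0 := by
    by_contra hc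
    push_neg at hc
    set c := ⟪z - p, u - p⟫ with hcdef
    set Q := ‖u - p‖ ^ 2 with hQdef
    have hQ0 : 0 ≤ Q := sq_nonneg _
    have harg : ∀ t : ℝ, 0 < t → t ≤ 1 → 2 * t * c ≤ t ^ 2 * Q := by
      intro t htpos ht1
      have hmem : p + t • (u - p) ∈ simplex n := s4_simplex_seg hpC hu htpos.le ht1
      have h2 := hmin _ hmem
      have hre : z - (p + t • (u - p)) = (z - p) - t • (u - p) := by abel
      have h3 : ‖z - p‖ ^ 2 ≤ ‖z - (p + t • (u - p))‖ ^ 2 := by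
        have := norm_nonneg (z - p)
        nlinarith [h2]
      rw [hre, s4_norm_sub_smul_sq] at h3
      rw [← hcdef, ← hQdef] at h3
      linarith
    set t0 : ℝ := min 1 (c / (Q + 1)) with ht0def
    have ht0pos : 0 < t0 := lt_min one_pos (div_pos hc (by linarith))
    have h := harg t0 ht0pos (min_le_left _ _)
    have h2 : t0 ≤ c / (Q + 1) := min_le_right _ _
    have h3 : t0 * (Q + 1) ≤ c := (le_div_iff₀ (by linarith)).mp h2
    nlinarith [mul_le_mul_of_nonneg_left h3 ht0pos.le, mul_pos ht0pos ht0pos, mul_pos ht0pos hc]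
  have hid : ‖z - u‖ ^ 2 = ‖z - p‖ ^ 2 - 2 * ⟪z - p, u - p⟫ + ‖u - p‖ ^ 2 := by
    have hre : z - u = (z - p) - (1 : ℝ) • (u - p) := by
      simp only [one_smul]; abel
    rw [hre, s4_norm_sub_smul_sq]; ring
  have := sq_nonneg ‖z - p‖
  have hrev : ‖p - u‖ = ‖u - p‖ := norm_sub_rev _ _
  rw [hrev]
  nlinarith [key, norm_nonneg (z - p)]

lemma s4_tvec_norm (X : Fin K → Euc m) (u : Euc m) :
    ‖tvec X u‖ ^ 2 ≤ frobSq X * ‖u‖ ^ 2 := by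
  rw [s4_norm_sq, frobSq, Finset.sum_mul]
  refine Finset.sum_le_sum fun i _ => ?_
  rw [s4_tvec_apply]
  have h := real_inner_mul_inner_self_le (X i) u
  rw [real_inner_self_eq_norm_sq, real_inner_self_eq_norm_sq] at h
  nlinarith [h]

lemma s4_comb_norm (X : Fin K → Euc m) (v : Euc K) :
    ‖comb X v‖ ^ 2 ≤ ‖v‖ ^ 2 * frobSq X := by
  have h1 : ‖comb X v‖ ≤ ∑ i, |v i| * ‖X i‖ := by
    refine (norm_sum_le _ _).trans ?_
    refine Finset.sum_le_sum fun i _ => ?_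
    rw [norm_smul, Real.norm_eq_abs]
  have h2 : (∑ i, |v i| * ‖X i‖) ^ 2 ≤ (∑ i, |v i| ^ 2) * ∑ i, ‖X i‖ ^ 2 :=
    Finset.sum_mul_sq_le_sq_mul_sq _ _ _
  have h3 : (∑ i, |v i| ^ 2) = ‖v‖ ^ 2 := by
    rw [s4_norm_sq]
    exact Finset.sum_congr rfl fun i _ => sq_abs _
  have h4 : 0 ≤ ∑ i, |v i| * ‖X i‖ :=
    Finset.sum_nonneg fun i _ => mul_nonneg (abs_nonneg _) (norm_nonneg _)
  have h5 : ‖comb X v‖ ^ 2 ≤ (∑ i, |v i| * ‖X i‖) ^ 2 := by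
    nlinarith [norm_nonneg (comb X v)]
  rw [frobSq, ← h3]
  linarith [h2, h5]

lemma s4_frobSq_nonneg (X : Fin K → Euc m) : 0 ≤ frobSq X :=
  Finset.sum_nonneg fun i _ => sq_nonneg _

lemma s4_grad (g : Fin K → Euc m) (wt wρ : Euc K) (lam ρ : ℝ) (hρ : 0 < ρ)
    (hwρmem : wρ ∈ simplex K)
    (hwρmin : ∀ u ∈ simplex K,
      (1/2) * ‖comb g wρ + lam • comb g wt‖ ^ 2 + (ρ/2) * ‖wρ‖ ^ 2
        ≤ (1/2) * ‖comb g u + lam • comb g wt‖ ^ 2 + (ρ/2) * ‖u‖ ^ 2)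
    {w : Euc K} (hw : w ∈ simplex K) :
    ρ * ‖w - wρ‖ ^ 2 ≤ ⟪tvec g (comb g (w + lam • wt)) + ρ • w, w - wρ⟫ := by
  set h := w - wρ with hh
  set A := comb g wρ + lam • comb g wt with hA
  set c : ℝ := ⟪A, comb g h⟫ + ρ * ⟪wρ, h⟫ with hc
  set Q : ℝ := (1/2) * ‖comb g h‖ ^ 2 + (ρ/2) * ‖h‖ ^ 2 with hQ
  have hQ0 : 0 ≤ Q := by
    have := sq_nonneg ‖comb g h‖; have := sq_nonneg ‖h‖; positivity
  -- first order optimality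
  have hc0 : 0 ≤ c := by
    by_contra hneg
    push_neg at hneg
    have harg : ∀ t : ℝ, 0 < t → t ≤ 1 → 0 ≤ t * c + t ^ 2 * Q := by
      intro t htpos ht1
      have hmem : wρ + t • h ∈ simplex K := by
        have := s4_simplex_seg hwρmem hw htpos.le ht1
        rwa [← hh] at this
      have h2 := hwρmin _ hmem
      have e1 : comb g (wρ + t • h) + lam • comb g wt = A + t • comb g h := by
        rw [s4_comb_add, s4_comb_smul, hA]; abel
      rw [e1] at h2
      rw [s4_norm_add_smul_sq A (comb g h) t, s4_norm_add_smul_sq wρ h t] at h2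
      rw [hc, hQ]
      nlinarith [h2]
    have ht0pos : 0 < min 1 (-c / (Q + 1)) :=
      lt_min one_pos (div_pos (by linarith) (by linarith))
    have h := harg _ ht0pos (min_le_left _ _)
    have h2 : min 1 (-c / (Q + 1)) ≤ -c / (Q + 1) := min_le_right _ _
    have h3 : min 1 (-c / (Q + 1)) * (Q + 1) ≤ -c := (le_div_iff₀ (by linarith)).mp h2
    nlinarith [mul_le_mul_of_nonneg_left h3 ht0pos.le, mul_pos ht0pos ht0pos]
  -- expand the target inner product
  have e2 : comb g (w + lam • wt) = A + comb g h := by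
    rw [s4_comb_add, s4_comb_smul, hA, hh, s4_comb_sub]; abel
  have e3 : ⟪tvec g (comb g (w + lam • wt)) + ρ • w, h⟫
      = c + ‖comb g h‖ ^ 2 + ρ * ‖h‖ ^ 2 := by
    rw [inner_add_left, s4_inner_tvec, e2, inner_add_left, real_inner_smul_left]
    have e4 : w = wρ + h := by rw [hh]; abel
    have e5 : ⟪w, h⟫ = ⟪wρ, h⟫ + ⟪h, h⟫ := by rw [e4, inner_add_left]
    rw [e5, real_inner_self_eq_norm_sq (comb g h), real_inner_self_eq_norm_sq h, hc]
    ring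
  rw [e3]
  nlinarith [sq_nonneg ‖comb g h‖]

end s4aux

set_option maxHeartbeats 2000000 in
/-- One step of projected SGD on the ρ-regularized objective
`f(w) = (1/2)‖Gw + λg₀‖² + (ρ/2)‖w‖²` (with `g₀ = Gw̃`) contracts:
`E‖w_{s+1} − w*_{ρ,λ}‖² ≤ (1 − 2βρ)E‖w_s − w*_{ρ,λ}‖² + 3β²C₁`,
where `C₁ = 4(1+λ²)(Kσ₀² + C_g²)² + ρ²`. -/
theorem stmt4 {m K : ℕ} (hK : 2 ≤ K) (hm : 1 ≤ m)
    {Ω : Type} [MeasurableSpace Ω] (μ : Measure Ω) [IsProbabilityMeasure μ]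
    (g : Fin K → Euc m) (wt : Euc K) (hwt : wt ∈ simplex K)
    (lam ρ β σ0 Cg : ℝ)
    (hlam : 0 ≤ lam) (hρ : 0 < ρ) (hβ : 0 < β) (hσ0 : 0 ≤ σ0) (hCg : 0 < Cg)
    -- the minimizer of the ρ-regularized objective over the simplex
    (wρ : Euc K) (hwρmem : wρ ∈ simplex K)
    (hwρmin : ∀ u ∈ simplex K,
      (1/2) * ‖comb g wρ + lam • comb g wt‖ ^ 2 + (ρ/2) * ‖wρ‖ ^ 2
        ≤ (1/2) * ‖comb g u + lam • comb g wt‖ ^ 2 + (ρ/2) * ‖u‖ ^ 2)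
    -- the current iterate and the stochastic gradient matrices
    (ws ws1 : Ω → Euc K) (X X' : Ω → (Fin K → Euc m))
    (hws : ∀ ω, ws ω ∈ simplex K)
    (hmws : Measurable ws) (hmX : Measurable X) (hmX' : Measurable X')
    -- X and X' are independent, and (X, X') is independent of w_s
    (hXX' : IndepFun X X' μ)
    (hXw : IndepFun (fun ω => (X ω, X' ω)) ws μ)
    -- unbiasedness, variance and norm bounds
    (hintX : Integrable X μ) (hintX' : Integrable X' μ)
    (hint2X : Integrable (fun ω => frobSq (X ω)) μ)
    (hint2X' : Integrable (fun ω => frobSq (X' ω)) μ)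
    (hint4X : Integrable (fun ω => (frobSq (X ω)) ^ 2) μ)
    (hint4X' : Integrable (fun ω => (frobSq (X' ω)) ^ 2) μ)
    (hEX : ∫ ω, X ω ∂μ = g) (hEX' : ∫ ω, X' ω ∂μ = g)
    (hvarX : ∫ ω, frobSq (fun i => X ω i - g i) ∂μ ≤ K * σ0 ^ 2)
    (hvarX' : ∫ ω, frobSq (fun i => X' ω i - g i) ∂μ ≤ K * σ0 ^ 2)
    (hG : frob g ≤ Cg)
    -- the projected stochastic-gradient step
    (hstep : ∀ ω, projOn (simplex K)
      (ws ω - β • (tvec (X ω)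
          (comb (X' ω) (ws ω) + lam • comb (X' ω) wt) + ρ • ws ω))
      (ws1 ω)) :
    ∫ ω, ‖ws1 ω - wρ‖ ^ 2 ∂μ
      ≤ (1 - 2 * β * ρ) * ∫ ω, ‖ws ω - wρ‖ ^ 2 ∂μ
        + 3 * β ^ 2 * (4 * (1 + lam ^ 2) * ((K : ℝ) * σ0 ^ 2 + Cg ^ 2) ^ 2 + ρ ^ 2) := by
  classical
  set S : ℝ := (K : ℝ) * σ0 ^ 2 + Cg ^ 2 with hSdef
  have hS0 : 0 ≤ S := by positivity
  set gh : Ω → Euc K := fun ω => tvec (X ω) (comb (X' ω) (ws ω + lam • wt)) + ρ • ws ω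
    with hghdef
  have hstep' : ∀ ω, projOn (simplex K) (ws ω - β • gh ω) (ws1 ω) := by
    intro ω
    have h := hstep ω
    rw [show comb (X' ω) (ws ω) + lam • comb (X' ω) wt = comb (X' ω) (ws ω + lam • wt) from by
      rw [s4_comb_add, s4_comb_smul]] at h
    exact h
  -- basic component measurability
  have hmXi : ∀ i : Fin K, Measurable fun ω => X ω i := fun i => hmX.eval
  have hmX'i : ∀ i : Fin K, Measurable fun ω => X' ω i := fun i => hmX'.eval
  have hmwsi : ∀ i : Fin K, Measurable fun ω => ws ω i := fun i =>
    (EuclideanSpace.proj i : Euc K →L[ℝ] ℝ).continuous.measurable.comp hmws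
  -- component integrability and expectations
  have hintXi : ∀ i, Integrable (fun ω => X ω i) μ := fun i =>
    (ContinuousLinearMap.proj (R := ℝ) (φ := fun _ : Fin K => Euc m) i).integrable_comp hintX
  have hintX'i : ∀ i, Integrable (fun ω => X' ω i) μ := fun i =>
    (ContinuousLinearMap.proj (R := ℝ) (φ := fun _ : Fin K => Euc m) i).integrable_comp hintX'
  have hEXi : ∀ i, ∫ ω, X ω i ∂μ = g i := fun i => by
    have h := (ContinuousLinearMap.proj (R := ℝ)
      (φ := fun _ : Fin K => Euc m) i).integral_comp_comm hintX
    rw [hEX] at h; exact h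
  have hEX'i : ∀ i, ∫ ω, X' ω i ∂μ = g i := fun i => by
    have h := (ContinuousLinearMap.proj (R := ℝ)
      (φ := fun _ : Fin K => Euc m) i).integral_comp_comm hintX'
    rw [hEX'] at h; exact h
  have hintXia : ∀ (i : Fin K) (a : Fin m), Integrable (fun ω => X ω i a) μ := fun i a =>
    (EuclideanSpace.proj a : Euc m →L[ℝ] ℝ).integrable_comp (hintXi i)
  have hintX'ia : ∀ (i : Fin K) (a : Fin m), Integrable (fun ω => X' ω i a) μ := fun i a =>
    (EuclideanSpace.proj a : Euc m →L[ℝ] ℝ).integrable_comp (hintX'i i)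
  have hEXia : ∀ (i : Fin K) (a : Fin m), ∫ ω, X ω i a ∂μ = g i a := fun i a => by
    have h := (EuclideanSpace.proj a : Euc m →L[ℝ] ℝ).integral_comp_comm (hintXi i)
    rw [hEXi i] at h; exact h
  have hEX'ia : ∀ (i : Fin K) (a : Fin m), ∫ ω, X' ω i a ∂μ = g i a := fun i a => by
    have h := (EuclideanSpace.proj a : Euc m →L[ℝ] ℝ).integral_comp_comm (hintX'i i)
    rw [hEX'i i] at h; exact h
  -- scalar independence of matrix entries
  have hindscal : ∀ (i j : Fin K) (a : Fin m),
      IndepFun (fun ω => X ω i a) (fun ω => X' ω j a) μ := by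
    intro i j a
    have hφ : Measurable fun x : Fin K → Euc m => x i a :=
      (EuclideanSpace.proj a : Euc m →L[ℝ] ℝ).continuous.measurable.comp (measurable_pi_apply i)
    have hψ : Measurable fun x : Fin K → Euc m => x j a :=
      (EuclideanSpace.proj a : Euc m →L[ℝ] ℝ).continuous.measurable.comp (measurable_pi_apply j)
    exact hXX'.comp hφ hψ
  have hprodint : ∀ (i j : Fin K) (a : Fin m),
      Integrable (fun ω => X ω i a * X' ω j a) μ := fun i j a =>
    (hindscal i j a).integrable_mul (hintXia i a) (hintX'ia j a)
  have hPmul : ∀ (i j : Fin K) (a : Fin m),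
      ∫ ω, X ω i a * X' ω j a ∂μ = g i a * g j a := fun i j a => by
    have h := (hindscal i j a).integral_fun_mul_eq_mul_integral (hintXia i a).aestronglyMeasurable
      (hintX'ia j a).aestronglyMeasurable
    beta_reduce at h
    rw [hEXia i a, hEX'ia j a] at h
    exact h
  -- the inner products ⟪X_i, X'_j⟫
  have hPeq : ∀ (i j : Fin K), (fun ω => (⟪X ω i, X' ω j⟫ : ℝ))
      = fun ω => ∑ a, X ω i a * X' ω j a := fun i j =>
    funext fun ω => by simp [PiLp.inner_apply, RCLike.inner_apply, mul_comm]
  have hPint : ∀ i j : Fin K, Integrable (fun ω => (⟪X ω i, X' ω j⟫ : ℝ)) μ := fun i j => by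
    rw [hPeq i j]
    exact integrable_finset_sum _ fun a _ => hprodint i j a
  have hPval : ∀ i j : Fin K, ∫ ω, (⟪X ω i, X' ω j⟫ : ℝ) ∂μ = ⟪g i, g j⟫ := fun i j => by
    rw [hPeq i j, integral_finset_sum _ fun a _ => hprodint i j a]
    simp only [hPmul]
    simp [PiLp.inner_apply, RCLike.inner_apply, mul_comm]
  -- simplex component bounds
  have hwsb : ∀ ω i, 0 ≤ ws ω i ∧ ws ω i ≤ 1 := fun ω i => s4_simplex_comp (hws ω) i
  have hwtb : ∀ i, 0 ≤ wt i ∧ wt i ≤ 1 := fun i => s4_simplex_comp hwt i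
  have hwρb : ∀ i, 0 ≤ wρ i ∧ wρ i ≤ 1 := fun i => s4_simplex_comp hwρmem i
  -- the scalar factors coming from w_s
  have hmR : ∀ i j : Fin K, Measurable (fun ω => (ws ω j + lam * wt j) * (ws ω i - wρ i)) :=
    fun i j => ((hmwsi j).add_const _).mul ((hmwsi i).sub_const _)
  have hRbd : ∀ (i j : Fin K) ω, ‖(ws ω j + lam * wt j) * (ws ω i - wρ i)‖ ≤ 1 + lam := by
    intro i j ω
    obtain ⟨h1a, h1b⟩ := hwsb ω j
    obtain ⟨h2a, h2b⟩ := hwsb ω i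
    obtain ⟨h3a, h3b⟩ := hwtb j
    obtain ⟨h4a, h4b⟩ := hwρb i
    rw [Real.norm_eq_abs, abs_mul]
    have e1 : |ws ω j + lam * wt j| ≤ 1 + lam := by
      rw [abs_of_nonneg (by nlinarith)]
      nlinarith
    have e2 : |ws ω i - wρ i| ≤ 1 := abs_le.mpr ⟨by linarith, by linarith⟩
    calc |ws ω j + lam * wt j| * |ws ω i - wρ i| ≤ (1 + lam) * 1 :=
          mul_le_mul e1 e2 (abs_nonneg _) (by linarith)
      _ = 1 + lam := mul_one _
  have hRint : ∀ i j : Fin K,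
      Integrable (fun ω => (ws ω j + lam * wt j) * (ws ω i - wρ i)) μ := fun i j =>
    (integrable_const (1 + lam)).mono' (hmR i j).aestronglyMeasurable
      (Filter.Eventually.of_forall (hRbd i j))
  have hindPR : ∀ i j : Fin K, IndepFun (fun ω => (⟪X ω i, X' ω j⟫ : ℝ))
      (fun ω => (ws ω j + lam * wt j) * (ws ω i - wρ i)) μ := by
    intro i j
    have hφ : Measurable fun p : (Fin K → Euc m) × (Fin K → Euc m) => (⟪p.1 i, p.2 j⟫ : ℝ) :=
      Measurable.inner (measurable_fst.eval) (measurable_snd.eval)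
    have hψ : Measurable fun w : Euc K => (w j + lam * wt j) * (w i - wρ i) :=
      ((EuclideanSpace.proj j : Euc K →L[ℝ] ℝ).continuous.measurable.add_const _).mul
        ((EuclideanSpace.proj i : Euc K →L[ℝ] ℝ).continuous.measurable.sub_const _)
    exact hXw.comp hφ hψ
  have hPRint : ∀ i j : Fin K, Integrable
      (fun ω => (⟪X ω i, X' ω j⟫ : ℝ) * ((ws ω j + lam * wt j) * (ws ω i - wρ i))) μ :=
    fun i j => (hindPR i j).integrable_mul (hPint i j) (hRint i j)
  have hsplit : ∀ i j : Fin K,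
      ∫ ω, (⟪X ω i, X' ω j⟫ : ℝ) * ((ws ω j + lam * wt j) * (ws ω i - wρ i)) ∂μ
        = ⟪g i, g j⟫ * ∫ ω, (ws ω j + lam * wt j) * (ws ω i - wρ i) ∂μ := by
    intro i j
    have h := (hindPR i j).integral_fun_mul_eq_mul_integral (hPint i j).aestronglyMeasurable
      (hRint i j).aestronglyMeasurable
    beta_reduce at h
    rw [hPval i j] at h
    exact h
  -- pointwise expansion of the two inner products
  have hBpt : ∀ ω, (⟪ws ω - wρ, gh ω⟫ : ℝ)
      = (∑ i, ∑ j, (⟪X ω i, X' ω j⟫ : ℝ) * ((ws ω j + lam * wt j) * (ws ω i - wρ i)))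
        + ρ * ⟪ws ω, ws ω - wρ⟫ := by
    intro ω
    rw [real_inner_comm, hghdef]
    rw [inner_add_left, s4_bilin, real_inner_smul_left]
    congr 1
  have hTpt : ∀ ω, (⟪tvec g (comb g (ws ω + lam • wt)) + ρ • ws ω, ws ω - wρ⟫ : ℝ)
      = (∑ i, ∑ j, (⟪g i, g j⟫ : ℝ) * ((ws ω j + lam * wt j) * (ws ω i - wρ i)))
        + ρ * ⟪ws ω, ws ω - wρ⟫ := by
    intro ω
    rw [inner_add_left, s4_bilin, real_inner_smul_left]
    congr 1
  -- integrability of the pieces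
  have hmd : Measurable fun ω => ws ω - wρ := hmws.sub measurable_const
  have hdbd : ∀ ω, ‖ws ω - wρ‖ ≤ 2 := by
    intro ω
    refine (norm_sub_le _ _).trans ?_
    have := s4_simplex_norm_le (hws ω)
    have := s4_simplex_norm_le hwρmem
    linarith
  have intWD : Integrable (fun ω => (⟪ws ω, ws ω - wρ⟫ : ℝ)) μ := by
    refine (integrable_const (2 : ℝ)).mono' (hmws.inner hmd).aestronglyMeasurable
      (Filter.Eventually.of_forall fun ω => ?_)
    rw [Real.norm_eq_abs]
    calc |(⟪ws ω, ws ω - wρ⟫ : ℝ)| ≤ ‖ws ω‖ * ‖ws ω - wρ‖ := abs_real_inner_le_norm _ _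
      _ ≤ 1 * 2 := mul_le_mul (s4_simplex_norm_le (hws ω)) (hdbd ω)
            (norm_nonneg _) zero_le_one
      _ = 2 := by norm_num
  have intSum : Integrable (fun ω => ∑ i, ∑ j,
      (⟪X ω i, X' ω j⟫ : ℝ) * ((ws ω j + lam * wt j) * (ws ω i - wρ i))) μ :=
    integrable_finset_sum _ fun i _ => integrable_finset_sum _ fun j _ => hPRint i j
  have intB : Integrable (fun ω => (⟪ws ω - wρ, gh ω⟫ : ℝ)) μ := by
    rw [funext hBpt]
    exact intSum.add (intWD.const_mul ρ)
  have intTSum : Integrable (fun ω => ∑ i, ∑ j,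
      (⟪g i, g j⟫ : ℝ) * ((ws ω j + lam * wt j) * (ws ω i - wρ i))) μ :=
    integrable_finset_sum _ fun i _ => integrable_finset_sum _ fun j _ =>
      (hRint i j).const_mul _
  have intT : Integrable
      (fun ω => (⟪tvec g (comb g (ws ω + lam • wt)) + ρ • ws ω, ws ω - wρ⟫ : ℝ)) μ := by
    rw [funext hTpt]
    exact intTSum.add (intWD.const_mul ρ)
  -- ∫ B = ∫ T
  have hIBval : ∫ ω, (⟪ws ω - wρ, gh ω⟫ : ℝ) ∂μ
      = (∑ i, ∑ j, (⟪g i, g j⟫ : ℝ) * ∫ ω, (ws ω j + lam * wt j) * (ws ω i - wρ i) ∂μ)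
        + ρ * ∫ ω, (⟪ws ω, ws ω - wρ⟫ : ℝ) ∂μ := by
    rw [funext hBpt, integral_add intSum (intWD.const_mul ρ), integral_const_mul,
      integral_finset_sum _ fun i _ => integrable_finset_sum _ fun j _ => hPRint i j]
    congr 1
    refine Finset.sum_congr rfl fun i _ => ?_
    rw [integral_finset_sum _ fun j _ => hPRint i j]
    exact Finset.sum_congr rfl fun j _ => hsplit i j
  have hITval : ∫ ω, (⟪tvec g (comb g (ws ω + lam • wt)) + ρ • ws ω, ws ω - wρ⟫ : ℝ) ∂μ
      = (∑ i, ∑ j, (⟪g i, g j⟫ : ℝ) * ∫ ω, (ws ω j + lam * wt j) * (ws ω i - wρ i) ∂μ)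
        + ρ * ∫ ω, (⟪ws ω, ws ω - wρ⟫ : ℝ) ∂μ := by
    rw [funext hTpt, integral_add intTSum (intWD.const_mul ρ), integral_const_mul,
      integral_finset_sum _ fun i _ => integrable_finset_sum _ fun j _ => (hRint i j).const_mul _]
    congr 1
    refine Finset.sum_congr rfl fun i _ => ?_
    rw [integral_finset_sum _ fun j _ => (hRint i j).const_mul _]
    exact Finset.sum_congr rfl fun j _ => integral_const_mul _ _
  -- integrability of ‖d‖², and the contraction of the drift term
  have intA : Integrable (fun ω => ‖ws ω - wρ‖ ^ 2) μ := by
    refine (integrable_const (4 : ℝ)).mono' (hmd.norm.pow_const 2).aestronglyMeasurable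
      (Filter.Eventually.of_forall fun ω => ?_)
    rw [Real.norm_eq_abs, abs_of_nonneg (sq_nonneg _)]
    nlinarith [hdbd ω, norm_nonneg (ws ω - wρ)]
  have hTge : ρ * ∫ ω, ‖ws ω - wρ‖ ^ 2 ∂μ
      ≤ ∫ ω, (⟪tvec g (comb g (ws ω + lam • wt)) + ρ • ws ω, ws ω - wρ⟫ : ℝ) ∂μ := by
    rw [← integral_const_mul]
    exact integral_mono (intA.const_mul ρ) intT fun ω =>
      s4_grad g wt wρ lam ρ hρ hwρmem hwρmin (hws ω)
  have hf1 : ρ * ∫ ω, ‖ws ω - wρ‖ ^ 2 ∂μ ≤ ∫ ω, (⟪ws ω - wρ, gh ω⟫ : ℝ) ∂μ := by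
    rw [hIBval, ← hITval]
    exact hTge
  -- measurability of ‖gh‖²
  have hmcomb : Measurable fun ω => comb (X' ω) (ws ω + lam • wt) := by
    simp only [comb]
    refine Finset.measurable_sum _ fun j _ => Measurable.smul (f := fun ω => (ws ω + lam • wt) j) ?_ (hmX'i j)
    have e : (fun ω => (ws ω + lam • wt) j) = fun ω => ws ω j + lam * wt j :=
      funext fun ω => by simp [PiLp.add_apply, PiLp.smul_apply, smul_eq_mul]
    rw [e]
    exact (hmwsi j).add_const _
  have hmghi : ∀ i : Fin K, Measurable fun ω => gh ω i := by
    intro i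
    have e : (fun ω => gh ω i)
        = fun ω => (⟪X ω i, comb (X' ω) (ws ω + lam • wt)⟫ : ℝ) + ρ * ws ω i := by
      funext ω
      simp only [hghdef]
      simp [PiLp.add_apply, PiLp.smul_apply, s4_tvec_apply, smul_eq_mul]
    rw [e]
    exact ((hmXi i).inner hmcomb).add ((hmwsi i).const_mul ρ)
  have hmC : Measurable fun ω => ‖gh ω‖ ^ 2 := by
    have e : (fun ω => ‖gh ω‖ ^ 2) = fun ω => ∑ i, gh ω i ^ 2 :=
      funext fun ω => s4_norm_sq (gh ω)
    rw [e]
    exact Finset.measurable_sum _ fun i _ => (hmghi i).pow_const 2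
  -- pointwise bound on ‖gh‖²
  have hCpt : ∀ ω, ‖gh ω‖ ^ 2
      ≤ 2 * (1 + lam) ^ 2 * (frobSq (X ω) * frobSq (X' ω)) + 2 * ρ ^ 2 := by
    intro ω
    have h1 : ‖gh ω‖ ≤ ‖tvec (X ω) (comb (X' ω) (ws ω + lam • wt))‖ + ‖ρ • ws ω‖ := by
      rw [hghdef]
      exact norm_add_le _ _
    have h2 := s4_tvec_norm (X ω) (comb (X' ω) (ws ω + lam • wt))
    have h3 := s4_comb_norm (X' ω) (ws ω + lam • wt)
    have h4 : ‖ws ω + lam • wt‖ ≤ 1 + lam := by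
      refine (norm_add_le _ _).trans ?_
      have h4a := s4_simplex_norm_le (hws ω)
      have h4b := s4_simplex_norm_le hwt
      rw [norm_smul, Real.norm_eq_abs, abs_of_nonneg hlam]
      nlinarith
    have h5 : ‖ρ • ws ω‖ ≤ ρ := by
      rw [norm_smul, Real.norm_eq_abs, abs_of_nonneg hρ.le]
      nlinarith [s4_simplex_norm_le (hws ω), hρ.le]
    have h6 : ‖ws ω + lam • wt‖ ^ 2 ≤ (1 + lam) ^ 2 := by
      nlinarith [norm_nonneg (ws ω + lam • wt)]
    have h7 : ‖comb (X' ω) (ws ω + lam • wt)‖ ^ 2 ≤ (1 + lam) ^ 2 * frobSq (X' ω) :=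
      h3.trans (mul_le_mul_of_nonneg_right h6 (s4_frobSq_nonneg _))
    have h8 : ‖tvec (X ω) (comb (X' ω) (ws ω + lam • wt))‖ ^ 2
        ≤ (1 + lam) ^ 2 * (frobSq (X ω) * frobSq (X' ω)) := by
      refine h2.trans ?_
      have h9 := mul_le_mul_of_nonneg_left h7 (s4_frobSq_nonneg (X ω))
      nlinarith [h9]
    nlinarith [pow_le_pow_left₀ (norm_nonneg (gh ω)) h1 2, h8, h5,
      norm_nonneg (tvec (X ω) (comb (X' ω) (ws ω + lam • wt))), norm_nonneg (ρ • ws ω),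
      sq_nonneg (‖tvec (X ω) (comb (X' ω) (ws ω + lam • wt))‖ - ‖ρ • ws ω‖), hρ.le]
  -- the product of the Frobenius norms
  have hfm : Measurable fun x : Fin K → Euc m => frobSq x := by
    simp only [frobSq]
    exact Finset.measurable_sum _ fun i _ => ((measurable_pi_apply i).norm).pow_const 2
  have intXX' : Integrable (fun ω => frobSq (X ω) * frobSq (X' ω)) μ :=
    (hXX'.comp hfm hfm).integrable_mul hint2X hint2X'
  have hXXval : ∫ ω, frobSq (X ω) * frobSq (X' ω) ∂μ
      = (∫ ω, frobSq (X ω) ∂μ) * ∫ ω, frobSq (X' ω) ∂μ :=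
    (hXX'.comp hfm hfm).integral_fun_mul_eq_mul_integral hint2X.aestronglyMeasurable
      hint2X'.aestronglyMeasurable
  have intC : Integrable (fun ω => ‖gh ω‖ ^ 2) μ := by
    refine ((intXX'.const_mul (2 * (1 + lam) ^ 2)).add
      (integrable_const (2 * ρ ^ 2))).mono' hmC.aestronglyMeasurable
      (Filter.Eventually.of_forall fun ω => ?_)
    rw [Real.norm_eq_abs, abs_of_nonneg (sq_nonneg _)]
    exact hCpt ω
  have hICle : ∫ ω, ‖gh ω‖ ^ 2 ∂μ
      ≤ 2 * (1 + lam) ^ 2 * ((∫ ω, frobSq (X ω) ∂μ) * ∫ ω, frobSq (X' ω) ∂μ) + 2 * ρ ^ 2 := by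
    calc ∫ ω, ‖gh ω‖ ^ 2 ∂μ
        ≤ ∫ ω, 2 * (1 + lam) ^ 2 * (frobSq (X ω) * frobSq (X' ω)) + 2 * ρ ^ 2 ∂μ :=
          integral_mono intC ((intXX'.const_mul _).add (integrable_const _)) hCpt
      _ = 2 * (1 + lam) ^ 2 * ((∫ ω, frobSq (X ω) ∂μ) * ∫ ω, frobSq (X' ω) ∂μ) + 2 * ρ ^ 2 := by
          rw [integral_add (intXX'.const_mul _) (integrable_const _), integral_const_mul,
            hXXval, integral_const]
          simp
  -- second-moment bounds
  have hfg : frobSq g ≤ Cg ^ 2 := by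
    have h0 := s4_frobSq_nonneg g
    have h1 : frob g = Real.sqrt (frobSq g) := rfl
    nlinarith [Real.sq_sqrt h0, Real.sqrt_nonneg (frobSq g), hG, hCg, h1 ▸ hG]
  have hmom : ∀ (Y : Ω → (Fin K → Euc m)), Integrable Y μ →
      Integrable (fun ω => frobSq (Y ω)) μ → (∀ i, Integrable (fun ω => Y ω i) μ) →
      (∀ i, ∫ ω, Y ω i ∂μ = g i) →
      (∫ ω, frobSq (fun i => Y ω i - g i) ∂μ ≤ (K : ℝ) * σ0 ^ 2) →
      ∫ ω, frobSq (Y ω) ∂μ ≤ S := by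
    intro Y hintY hint2Y hintYi hEYi hvarY
    have hpt : ∀ ω, frobSq (Y ω)
        = frobSq (fun i => Y ω i - g i) + ((2 * ∑ i, (⟪g i, Y ω i⟫ : ℝ)) - frobSq g) := by
      intro ω
      have hterm : ∀ i : Fin K, ‖Y ω i‖ ^ 2
          = ‖Y ω i - g i‖ ^ 2 + (2 * (⟪g i, Y ω i⟫ : ℝ) - ‖g i‖ ^ 2) := by
        intro i
        have h := norm_sub_sq_real (Y ω i) (g i)
        have hc : (⟪Y ω i, g i⟫ : ℝ) = ⟪g i, Y ω i⟫ := real_inner_comm _ _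
        linarith [h, hc.le, hc.ge]
      calc frobSq (Y ω) = ∑ i, (‖Y ω i - g i‖ ^ 2 + (2 * (⟪g i, Y ω i⟫ : ℝ) - ‖g i‖ ^ 2)) :=
            Finset.sum_congr rfl fun i _ => hterm i
        _ = _ := by
            rw [Finset.sum_add_distrib, Finset.sum_sub_distrib, ← Finset.mul_sum]
            simp only [frobSq]
    have hii : ∀ i : Fin K, Integrable (fun ω => (⟪g i, Y ω i⟫ : ℝ)) μ := fun i =>
      (innerSL ℝ (g i)).integrable_comp (hintYi i)
    have hintInner : Integrable (fun ω => ∑ i, (⟪g i, Y ω i⟫ : ℝ)) μ :=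
      integrable_finset_sum _ fun i _ => hii i
    have hvalInner : ∫ ω, (∑ i, (⟪g i, Y ω i⟫ : ℝ)) ∂μ = frobSq g := by
      rw [integral_finset_sum _ fun i _ => hii i]
      have hterm : ∀ i : Fin K, ∫ ω, (⟪g i, Y ω i⟫ : ℝ) ∂μ = ‖g i‖ ^ 2 := fun i => by
        rw [integral_inner (hintYi i) (g i), hEYi i, real_inner_self_eq_norm_sq]
      simp only [hterm]
      simp only [frobSq]
    have hintVar : Integrable (fun ω => frobSq (fun i => Y ω i - g i)) μ := by
      have e : (fun ω => frobSq (fun i => Y ω i - g i))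
          = fun ω => frobSq (Y ω) - ((2 * ∑ i, (⟪g i, Y ω i⟫ : ℝ)) - frobSq g) :=
        funext fun ω => by rw [hpt ω]; ring
      rw [e]
      exact hint2Y.sub ((hintInner.const_mul 2).sub (integrable_const _))
    have j1 : Integrable (fun ω => (2 * ∑ i, (⟪g i, Y ω i⟫ : ℝ)) - frobSq g) μ :=
      (hintInner.const_mul 2).sub (integrable_const _)
    have hsplitY : ∫ ω, frobSq (Y ω) ∂μ
        = (∫ ω, frobSq (fun i => Y ω i - g i) ∂μ) + (2 * frobSq g - frobSq g) := by
      rw [funext hpt, integral_add hintVar j1,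
        integral_sub (hintInner.const_mul 2) (integrable_const _), integral_const_mul,
        hvalInner, integral_const]
      simp
    rw [hsplitY]
    rw [hSdef]
    linarith [hvarY, hfg]
  have hEfX := hmom X hintX hint2X hintXi hEXi hvarX
  have hEfX' := hmom X' hintX' hint2X' hintX'i hEX'i hvarX'
  have hEfX0 : 0 ≤ ∫ ω, frobSq (X ω) ∂μ :=
    integral_nonneg fun ω => s4_frobSq_nonneg _
  have hEfX'0 : 0 ≤ ∫ ω, frobSq (X' ω) ∂μ :=
    integral_nonneg fun ω => s4_frobSq_nonneg _
  have hEE : (∫ ω, frobSq (X ω) ∂μ) * (∫ ω, frobSq (X' ω) ∂μ) ≤ S * S :=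
    mul_le_mul hEfX hEfX' hEfX'0 hS0
  have hf4 : ∫ ω, ‖gh ω‖ ^ 2 ∂μ ≤ 12 * (1 + lam ^ 2) * (S * S) + 3 * ρ ^ 2 := by
    nlinarith [hICle, mul_le_mul_of_nonneg_left hEE
      (by positivity : (0:ℝ) ≤ 2 * (1 + lam) ^ 2), mul_nonneg hS0 hS0,
      sq_nonneg (1 - lam), sq_nonneg ρ]
  -- the one-step inequality, pointwise
  have hkey : ∀ ω, ‖ws1 ω - wρ‖ ^ 2
      ≤ ‖ws ω - wρ‖ ^ 2 - 2 * β * (⟪ws ω - wρ, gh ω⟫ : ℝ) + β ^ 2 * ‖gh ω‖ ^ 2 := by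
    intro ω
    have h1 := s4_proj (hstep' ω) hwρmem
    have h2 : ws ω - β • gh ω - wρ = ws ω - wρ - β • gh ω := by abel
    rw [h2, s4_norm_sub_smul_sq] at h1
    linarith [h1]
  have intRHS : Integrable (fun ω => ‖ws ω - wρ‖ ^ 2
      - 2 * β * (⟪ws ω - wρ, gh ω⟫ : ℝ) + β ^ 2 * ‖gh ω‖ ^ 2) μ :=
    (intA.sub (intB.const_mul (2 * β))).add (intC.const_mul (β ^ 2))
  calc ∫ ω, ‖ws1 ω - wρ‖ ^ 2 ∂μ
      ≤ ∫ ω, (‖ws ω - wρ‖ ^ 2 - 2 * β * (⟪ws ω - wρ, gh ω⟫ : ℝ) + β ^ 2 * ‖gh ω‖ ^ 2) ∂μ :=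
        integral_mono_of_nonneg (Filter.Eventually.of_forall fun ω => sq_nonneg _)
          intRHS (Filter.Eventually.of_forall hkey)
    _ = (∫ ω, ‖ws ω - wρ‖ ^ 2 ∂μ) - 2 * β * (∫ ω, (⟪ws ω - wρ, gh ω⟫ : ℝ) ∂μ)
        + β ^ 2 * ∫ ω, ‖gh ω‖ ^ 2 ∂μ := by
        have i1 : Integrable (fun ω => ‖ws ω - wρ‖ ^ 2
            - 2 * β * (⟪ws ω - wρ, gh ω⟫ : ℝ)) μ := intA.sub (intB.const_mul _)
        have i2 : Integrable (fun ω => β ^ 2 * ‖gh ω‖ ^ 2) μ := intC.const_mul _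
        have i3 : Integrable (fun ω => 2 * β * (⟪ws ω - wρ, gh ω⟫ : ℝ)) μ := intB.const_mul _
        rw [integral_add i1 i2, integral_sub intA i3, integral_const_mul, integral_const_mul]
    _ ≤ (1 - 2 * β * ρ) * ∫ ω, ‖ws ω - wρ‖ ^ 2 ∂μ
        + 3 * β ^ 2 * (4 * (1 + lam ^ 2) * S ^ 2 + ρ ^ 2) := by
        nlinarith [mul_le_mul_of_nonneg_left hf1 (by positivity : (0:ℝ) ≤ 2 * β),
          mul_le_mul_of_nonneg_left hf4 (sq_nonneg β), sq_nonneg β, mul_nonneg hS0 hS0]
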